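/- Let R be an associative unital ring, Q a projective left R-module, μ an infinite cardinal, and Y ⊆ Q a subset of cardinality at most μ. Then there exists a submodule Q′ of Q such that Y ⊆ Q′, Q′ is ≤μ-generated, and both Q′ and Q/Q′ are projective R-modules. -/

import Mathlib

/-!
STATEMENT 5: if `Q` is a projective `R`-module, `μ` an infinite cardinal, and `Y ⊆ Q`
has cardinality at most `μ`, then there is a submodule `Q' ≤ Q` containing `Y` that is
`≤μ`-generated and such that both `Q'` and `Q ⧸ Q'` are projective.
-/

universe u v

open Cardinal

set_option maxHeartbeats 1000000 in
theorem exists_projective_submodule_of_card_le {R : Type u} [Ring R] {Q : Type v}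
    [AddCommGroup Q] [Module R Q] (hQ : Module.Projective R Q)
    (μ : Cardinal.{v}) (hμ : Cardinal.aleph0 ≤ μ) (Y : Set Q) (hY : #Y ≤ μ) :
    ∃ Q' : Submodule R Q, Y ⊆ (Q' : Set Q) ∧
      (∃ S : Set Q, S ⊆ (Q' : Set Q) ∧ #S ≤ μ ∧ Submodule.span R S = Q') ∧
      Module.Projective R Q' ∧ Module.Projective R (Q ⧸ Q') := by
  classical
  obtain ⟨s, hs⟩ := Module.projective_def.mp hQ
  set p : (Q →₀ R) →ₗ[R] Q := Finsupp.linearCombination R (id : Q → Q) with hp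
  -- the closure construction
  let g : Q → Set Q := fun q => ((s q).support : Set Q)
  have hg : ∀ q, #(g q) ≤ ℵ₀ := fun q =>
    (Set.Finite.lt_aleph0 (Finset.finite_toSet _)).le
  let J : ℕ → Set Q := fun n => Nat.rec Y (fun _ Jn => Jn ∪ ⋃ q ∈ Jn, g q) n
  have hJmono : ∀ n, J n ⊆ J (n + 1) := fun n => Set.subset_union_left
  have hJcard : ∀ n, #(↥(J n)) ≤ μ := by
    intro n
    induction n with
    | zero => exact hY
    | succ n ih =>
      have h1 : #(↥(⋃ q ∈ J n, g q)) ≤ μ := by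
        rw [Set.biUnion_eq_iUnion]
        refine le_trans Cardinal.mk_iUnion_le_sum_mk ?_
        refine le_trans (Cardinal.sum_le_sum _ (fun _ => ℵ₀) fun i => hg _) ?_
        rw [Cardinal.sum_const']
        calc #(↥(J n)) * ℵ₀ ≤ μ * μ := mul_le_mul' ih hμ
          _ = μ := Cardinal.mul_eq_self hμ
      calc #(↥(J (n + 1))) ≤ #(↥(J n)) + #(↥(⋃ q ∈ J n, g q)) := Cardinal.mk_union_le _ _
        _ ≤ μ + μ := add_le_add ih h1
        _ = μ := Cardinal.add_eq_self hμ
  let K : Set Q := ⋃ n : ULift.{v} ℕ, J n.down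
  have hYK : Y ⊆ K := Set.subset_iUnion (fun n : ULift.{v} ℕ => J n.down) ⟨0⟩
  have hKcard : #K ≤ μ := by
    refine le_trans (Cardinal.mk_iUnion_le _) ?_
    have h1 : #(ULift.{v} ℕ) = ℵ₀ := by simp
    have h2 : ⨆ n : ULift.{v} ℕ, #(↥(J n.down)) ≤ μ := ciSup_le' fun n => hJcard n.down
    calc #(ULift.{v} ℕ) * ⨆ n : ULift.{v} ℕ, #(↥(J n.down)) ≤ μ * μ := by
          rw [h1]; exact mul_le_mul' hμ h2
      _ = μ := Cardinal.mul_eq_self hμ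
  have hKcl : ∀ q ∈ K, g q ⊆ K := by
    intro q hq
    obtain ⟨n, hn⟩ := Set.mem_iUnion.mp hq
    intro x hx
    refine Set.mem_iUnion.mpr ⟨⟨n.down + 1⟩, ?_⟩
    exact Set.mem_union_right _ (Set.mem_biUnion hn hx)
  -- the submodule
  set FJ : Submodule R (Q →₀ R) := Finsupp.supported R R K with hFJ
  set Q' : Submodule R Q := Submodule.comap s FJ with hQ'
  have hmemQ' : ∀ q ∈ K, q ∈ Q' := fun q hq =>
    (Finsupp.mem_supported R _).mpr (hKcl q hq)
  have hmapP : Submodule.map p FJ ≤ Q' := by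
    rw [hp, hFJ, ← Finsupp.span_image_eq_map_linearCombination, Set.image_id]
    exact Submodule.span_le.mpr fun q hq => hmemQ' q hq
  have hspan : Submodule.span R K = Q' := by
    apply le_antisymm
    · exact Submodule.span_le.mpr fun q hq => hmemQ' q hq
    · intro q hq
      have : q = p (s q) := (hs q).symm
      rw [this]
      rw [hp, ← Set.image_id K, Finsupp.span_image_eq_map_linearCombination]
      exact ⟨s q, hq, rfl⟩
  -- projectivity of Q'
  haveI : Module.Projective R (Finsupp.supported R R K) :=
    Module.Projective.of_equiv (Finsupp.supportedEquivFinsupp (M := R) (R := R) K).symm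
  haveI : Module.Projective R (Finsupp.supported R R Kᶜ) :=
    Module.Projective.of_equiv (Finsupp.supportedEquivFinsupp (M := R) (R := R) Kᶜ).symm
  have hproj1 : Module.Projective R Q' := by
    let i₁ : Q' →ₗ[R] Finsupp.supported R R K :=
      (s.comp Q'.subtype).codRestrict FJ fun x => x.2
    let s₁ : Finsupp.supported R R K →ₗ[R] Q' :=
      (p.comp FJ.subtype).codRestrict Q' fun f => hmapP ⟨f, f.2, rfl⟩
    refine Module.Projective.of_split i₁ s₁ ?_
    ext x
    exact hs x
  -- projectivity of the quotient of the big free module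
  haveI hprojFF : Module.Projective R ((Q →₀ R) ⧸ FJ) := by
    let r : (Q →₀ R) →ₗ[R] Finsupp.supported R R Kᶜ := Finsupp.restrictDom R R Kᶜ
    have h0 : FJ ≤ LinearMap.ker r := by
      intro f hf
      rw [LinearMap.mem_ker]
      ext a
      simp only [r, Finsupp.restrictDom_apply, ZeroMemClass.coe_zero, Finsupp.coe_zero,
        Pi.zero_apply]
      rw [Finsupp.filter_apply]
      split_ifs with h
      · exact (Finsupp.mem_supported' R f).mp hf a h
      · rfl
    let φ : ((Q →₀ R) ⧸ FJ) →ₗ[R] Finsupp.supported R R Kᶜ :=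
      @Submodule.liftQ R (Q →₀ R) _ _ _ FJ R (Finsupp.supported R R Kᶜ) _ _ _ (RingHom.id R) r h0
    let ψ : Finsupp.supported R R Kᶜ →ₗ[R] ((Q →₀ R) ⧸ FJ) :=
      FJ.mkQ.comp (Finsupp.supported R R Kᶜ).subtype
    refine Module.Projective.of_split φ ψ ?_
    apply Submodule.linearMap_qext
    refine LinearMap.ext fun f => ?_
    show FJ.mkQ ((r f : Q →₀ R)) = FJ.mkQ f
    rw [Submodule.mkQ_apply, Submodule.mkQ_apply, Submodule.Quotient.eq]
    refine (Finsupp.mem_supported' R _).mpr fun a ha => ?_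
    simp only [r, Finsupp.restrictDom_apply, Finsupp.sub_apply]
    rw [Finsupp.filter_apply_pos (fun x => x ∈ Kᶜ) f ha, sub_self]
  -- projectivity of Q ⧸ Q'
  have hproj2 : Module.Projective R (Q ⧸ Q') := by
    let i₂ : (Q ⧸ Q') →ₗ[R] ((Q →₀ R) ⧸ FJ) := Submodule.mapQ Q' FJ s le_rfl
    have hle : FJ ≤ Submodule.comap p Q' := fun f hf => hmapP ⟨f, hf, rfl⟩
    let s₂ : ((Q →₀ R) ⧸ FJ) →ₗ[R] (Q ⧸ Q') := Submodule.mapQ FJ Q' p hle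
    refine Module.Projective.of_split i₂ s₂ ?_
    apply Submodule.linearMap_qext
    refine LinearMap.ext fun q => ?_
    show s₂ (i₂ (Q'.mkQ q)) = Q'.mkQ q
    rw [Submodule.mkQ_apply, Submodule.mapQ_apply, Submodule.mapQ_apply, hs q]
  exact ⟨Q', fun y hy => hmemQ' y (hYK hy), ⟨K, fun q hq => hmemQ' q hq, hKcard, hspan⟩,
    hproj1, hproj2⟩
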